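/- arXiv:2605.23638 — 4 statements merged into one kernel-verified Lean document; each statement's English description precedes it below -/
import Mathlib

section
/- For the canonical centers a, b, c and fixed radii r₁, r₂, r₃, the size of the triple sphere intersection satisfies |V_{r₁}(a) ∩ V_{r₂}(b) ∩ V_{r₃}(c)| = Σ_{a₁=0}^{t} C(t,a₁)·C(t,a₂)·C(t,a₃)·C(n−3t,a₄), where a₂ = (r₁+2t−r₂−2a₁)/2, a₃ = (r₁+2t−r₃−2a₁)/2, a₄ = (2a₁+r₂+r₃−4t)/2, and a summand is interpreted as 0 whenever the corresponding a₂, a₃, a₄ are not nonnegative integers within the block sizes. -/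
/-- Hamming sphere of radius `s` around `x`, as a finset. -/
def hSphere (n s : ℕ) (x : Fin n → Bool) : Finset (Fin n → Bool) :=
  Finset.univ.filter (fun y => hammingDist x y = s)

open Finset

namespace TripleAux

variable (n t : ℕ)

def B1 : Finset (Fin n) := univ.filter (fun i => (i : ℕ) < t)
def B2 : Finset (Fin n) := univ.filter (fun i => t ≤ (i : ℕ) ∧ (i : ℕ) < 2*t)
def B3 : Finset (Fin n) := univ.filter (fun i => 2*t ≤ (i : ℕ) ∧ (i : ℕ) < 3*t)
def B4 : Finset (Fin n) := univ.filter (fun i => 3*t ≤ (i : ℕ))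

lemma card_filter_Ico (l u : ℕ) (hu : u ≤ n) :
    (univ.filter (fun i : Fin n => l ≤ (i : ℕ) ∧ (i : ℕ) < u)).card = u - l := by
  rw [show (univ.filter (fun i : Fin n => l ≤ (i : ℕ) ∧ (i : ℕ) < u)) =
      (Finset.Ico l u).attachFin (fun m hm => lt_of_lt_of_le (Finset.mem_Ico.mp hm).2 hu) from ?_,
    Finset.card_attachFin, Nat.card_Ico]
  ext i
  simp [Finset.mem_attachFin, Finset.mem_Ico]

lemma card_B1 (h : 3*t ≤ n) : (B1 n t).card = t := by
  have : (B1 n t) = univ.filter (fun i : Fin n => 0 ≤ (i : ℕ) ∧ (i : ℕ) < t) := by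
    simp [B1]
  rw [this, card_filter_Ico n 0 t (by omega)]; omega

lemma card_B2 (h : 3*t ≤ n) : (B2 n t).card = t := by
  rw [B2, card_filter_Ico n t (2*t) (by omega)]; omega

lemma card_B3 (h : 3*t ≤ n) : (B3 n t).card = t := by
  rw [B3, card_filter_Ico n (2*t) (3*t) (by omega)]; omega

lemma card_B4 (h : 3*t ≤ n) : (B4 n t).card = n - 3*t := by
  have : (B4 n t) = univ.filter (fun i : Fin n => 3*t ≤ (i : ℕ) ∧ (i : ℕ) < n) := by
    ext i; simp [B4, i.isLt]
  rw [this, card_filter_Ico n (3*t) n le_rfl]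

lemma filter_card_split (p : Fin n → Prop) [DecidablePred p] :
    (univ.filter p).card
      = ((B1 n t).filter p).card + ((B2 n t).filter p).card
      + ((B3 n t).filter p).card + ((B4 n t).filter p).card := by
  simp only [B1, B2, B3, B4, Finset.filter_filter, Finset.card_filter]
  rw [← Finset.sum_add_distrib, ← Finset.sum_add_distrib, ← Finset.sum_add_distrib]
  refine Finset.sum_congr rfl fun i _ => ?_
  by_cases hp : p i <;> split_ifs <;> simp_all <;> omega

end TripleAux

namespace TripleAux
open Finset

def c1 (n t : ℕ) (y : Fin n → Bool) : ℕ := ((B1 n t).filter (fun i => y i = true)).card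
def c2 (n t : ℕ) (y : Fin n → Bool) : ℕ := ((B2 n t).filter (fun i => y i = true)).card
def c3 (n t : ℕ) (y : Fin n → Bool) : ℕ := ((B3 n t).filter (fun i => y i = true)).card
def c4 (n t : ℕ) (y : Fin n → Bool) : ℕ := ((B4 n t).filter (fun i => y i = true)).card
def m1 (n t : ℕ) (y : Fin n → Bool) : ℕ := ((B1 n t).filter (fun i => y i = false)).card
def m2 (n t : ℕ) (y : Fin n → Bool) : ℕ := ((B2 n t).filter (fun i => y i = false)).card
def m3 (n t : ℕ) (y : Fin n → Bool) : ℕ := ((B3 n t).filter (fun i => y i = false)).card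

variable (n t : ℕ)

lemma cm_aux (s : Finset (Fin n)) (y : Fin n → Bool) :
    (s.filter (fun i => y i = true)).card + (s.filter (fun i => y i = false)).card = s.card := by
  have := Finset.card_filter_add_card_filter_not (s := s) (p := fun i => y i = true)
  simpa [Bool.not_eq_true] using this

lemma cm1 (h : 3*t ≤ n) (y : Fin n → Bool) : c1 n t y + m1 n t y = t := by
  rw [c1, m1, cm_aux, card_B1 n t h]
lemma cm2 (h : 3*t ≤ n) (y : Fin n → Bool) : c2 n t y + m2 n t y = t := by
  rw [c2, m2, cm_aux, card_B2 n t h]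
lemma cm3 (h : 3*t ≤ n) (y : Fin n → Bool) : c3 n t y + m3 n t y = t := by
  rw [c3, m3, cm_aux, card_B3 n t h]
lemma c4_le (h : 3*t ≤ n) (y : Fin n → Bool) : c4 n t y ≤ n - 3*t := by
  rw [c4, ← card_B4 n t h]; exact Finset.card_filter_le _ _

lemma dist_a (y : Fin n → Bool) :
    hammingDist (fun _ => false) y = c1 n t y + c2 n t y + c3 n t y + c4 n t y := by
  show (univ.filter fun i => (false : Bool) ≠ y i).card = _
  rw [filter_card_split n t]
  rw [c1, c2, c3, c4]
  congr 1
  · congr 1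
    · congr 1 <;> · refine congrArg Finset.card (Finset.filter_congr ?_); intro i _; cases h : y i <;> simp [h]
    · refine congrArg Finset.card (Finset.filter_congr ?_); intro i _; cases h : y i <;> simp [h]
  · refine congrArg Finset.card (Finset.filter_congr ?_); intro i _; cases h : y i <;> simp [h]

lemma dist_b (y : Fin n → Bool) :
    hammingDist (fun i : Fin n => decide ((i : ℕ) < 2*t)) y
      = m1 n t y + m2 n t y + c3 n t y + c4 n t y := by
  show (univ.filter fun i : Fin n => decide ((i : ℕ) < 2*t) ≠ y i).card = _
  rw [filter_card_split n t]
  rw [m1, m2, c3, c4]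
  congr 1
  · congr 1
    · congr 1
      · refine congrArg Finset.card (Finset.filter_congr ?_); intro i hi
        simp only [B1, Finset.mem_filter, Finset.mem_univ, true_and] at hi
        cases h : y i <;> simp [h] <;> omega
      · refine congrArg Finset.card (Finset.filter_congr ?_); intro i hi
        simp only [B2, Finset.mem_filter, Finset.mem_univ, true_and] at hi
        cases h : y i <;> simp [h] <;> omega
    · refine congrArg Finset.card (Finset.filter_congr ?_); intro i hi
      simp only [B3, Finset.mem_filter, Finset.mem_univ, true_and] at hi
      cases h : y i <;> simp [h] <;> omega
  · refine congrArg Finset.card (Finset.filter_congr ?_); intro i hi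
    simp only [B4, Finset.mem_filter, Finset.mem_univ, true_and] at hi
    cases h : y i <;> simp [h] <;> omega

lemma dist_c (y : Fin n → Bool) :
    hammingDist (fun i : Fin n => decide ((i : ℕ) < t ∨ (2*t ≤ (i : ℕ) ∧ (i : ℕ) < 3*t))) y
      = m1 n t y + c2 n t y + m3 n t y + c4 n t y := by
  show (univ.filter fun i : Fin n => decide ((i : ℕ) < t ∨ (2*t ≤ (i : ℕ) ∧ (i : ℕ) < 3*t)) ≠ y i).card = _
  rw [filter_card_split n t]
  rw [m1, c2, m3, c4]
  congr 1
  · congr 1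
    · congr 1
      · refine congrArg Finset.card (Finset.filter_congr ?_); intro i hi
        simp only [B1, Finset.mem_filter, Finset.mem_univ, true_and] at hi
        cases h : y i <;> simp [h] <;> omega
      · refine congrArg Finset.card (Finset.filter_congr ?_); intro i hi
        simp only [B2, Finset.mem_filter, Finset.mem_univ, true_and] at hi
        cases h : y i <;> simp [h] <;> omega
    · refine congrArg Finset.card (Finset.filter_congr ?_); intro i hi
      simp only [B3, Finset.mem_filter, Finset.mem_univ, true_and] at hi
      cases h : y i <;> simp [h] <;> omega
  · refine congrArg Finset.card (Finset.filter_congr ?_); intro i hi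
    simp only [B4, Finset.mem_filter, Finset.mem_univ, true_and] at hi
    cases h : y i <;> simp [h] <;> omega

end TripleAux

namespace TripleAux
open Finset

variable (n t : ℕ)

lemma mem_B1 (i : Fin n) : i ∈ B1 n t ↔ (i : ℕ) < t := by simp [B1]
lemma mem_B2 (i : Fin n) : i ∈ B2 n t ↔ t ≤ (i : ℕ) ∧ (i : ℕ) < 2*t := by simp [B2]
lemma mem_B3 (i : Fin n) : i ∈ B3 n t ↔ 2*t ≤ (i : ℕ) ∧ (i : ℕ) < 3*t := by simp [B3]
lemma mem_B4 (i : Fin n) : i ∈ B4 n t ↔ 3*t ≤ (i : ℕ) := by simp [B4]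

lemma recover (S1 S2 S3 S4 : Finset (Fin n))
    (h1 : S1 ⊆ B1 n t) (h2 : S2 ⊆ B2 n t) (h3 : S3 ⊆ B3 n t) (h4 : S4 ⊆ B4 n t) :
    ((B1 n t).filter (fun i => i ∈ S1 ∨ i ∈ S2 ∨ i ∈ S3 ∨ i ∈ S4) = S1)
    ∧ ((B2 n t).filter (fun i => i ∈ S1 ∨ i ∈ S2 ∨ i ∈ S3 ∨ i ∈ S4) = S2)
    ∧ ((B3 n t).filter (fun i => i ∈ S1 ∨ i ∈ S2 ∨ i ∈ S3 ∨ i ∈ S4) = S3)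
    ∧ ((B4 n t).filter (fun i => i ∈ S1 ∨ i ∈ S2 ∨ i ∈ S3 ∨ i ∈ S4) = S4) := by
  refine ⟨?_, ?_, ?_, ?_⟩ <;>
  · ext i
    simp only [Finset.mem_filter]
    constructor
    · rintro ⟨hb, (h | h | h | h)⟩ <;>
        first
          | exact h
          | · exfalso
              have hv1 := (mem_B1 n t i).mp
              have hv2 := (mem_B2 n t i).mp
              have hv3 := (mem_B3 n t i).mp
              have hv4 := (mem_B4 n t i).mp
              have w1 := fun hh => hv1 (h1 hh)
              have w2 := fun hh => hv2 (h2 hh)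
              have w3 := fun hh => hv3 (h3 hh)
              have w4 := fun hh => hv4 (h4 hh)
              first
                | (have := hv1 hb)
                | (have := hv2 hb)
                | (have := hv3 hb)
                | (have := hv4 hb)
              first
                | (have := w1 h; omega)
                | (have := w2 h; omega)
                | (have := w3 h; omega)
                | (have := w4 h; omega)
    · intro hmem
      first
        | exact ⟨h1 hmem, Or.inl hmem⟩
        | exact ⟨h2 hmem, Or.inr (Or.inl hmem)⟩
        | exact ⟨h3 hmem, Or.inr (Or.inr (Or.inl hmem))⟩
        | exact ⟨h4 hmem, Or.inr (Or.inr (Or.inr hmem))⟩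

end TripleAux

namespace TripleAux
open Finset

variable (n t : ℕ)

lemma fiber_card (h : 3*t ≤ n) (a1 a2 a3 a4 : ℕ) :
    (univ.filter (fun y : Fin n → Bool =>
        c1 n t y = a1 ∧ c2 n t y = a2 ∧ c3 n t y = a3 ∧ c4 n t y = a4)).card
    = t.choose a1 * t.choose a2 * t.choose a3 * (n - 3*t).choose a4 := by
  have key : (univ.filter (fun y : Fin n → Bool =>
        c1 n t y = a1 ∧ c2 n t y = a2 ∧ c3 n t y = a3 ∧ c4 n t y = a4)).card
      = (((B1 n t).powersetCard a1) ×ˢ (((B2 n t).powersetCard a2) ×ˢ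
          (((B3 n t).powersetCard a3) ×ˢ ((B4 n t).powersetCard a4)))).card := by
    refine Finset.card_bij'
      (fun y _ => ((B1 n t).filter (fun i => y i = true),
        ((B2 n t).filter (fun i => y i = true),
         ((B3 n t).filter (fun i => y i = true), (B4 n t).filter (fun i => y i = true)))))
      (fun s _ => fun i => decide (i ∈ s.1 ∨ i ∈ s.2.1 ∨ i ∈ s.2.2.1 ∨ i ∈ s.2.2.2))
      ?_ ?_ ?_ ?_
    · intro y hy
      simp only [Finset.mem_filter, Finset.mem_univ, true_and] at hy
      simp only [Finset.mem_product, Finset.mem_powersetCard]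
      exact ⟨⟨Finset.filter_subset _ _, hy.1⟩, ⟨Finset.filter_subset _ _, hy.2.1⟩,
        ⟨Finset.filter_subset _ _, hy.2.2.1⟩, ⟨Finset.filter_subset _ _, hy.2.2.2⟩⟩
    · intro s hs
      simp only [Finset.mem_product, Finset.mem_powersetCard] at hs
      obtain ⟨⟨hs1, hc1⟩, ⟨hs2, hc2⟩, ⟨hs3, hc3⟩, ⟨hs4, hc4⟩⟩ := hs
      obtain ⟨e1, e2, e3, e4⟩ := recover n t s.1 s.2.1 s.2.2.1 s.2.2.2 hs1 hs2 hs3 hs4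
      simp only [Finset.mem_filter, Finset.mem_univ, true_and]
      simp only [c1, c2, c3, c4, decide_eq_true_eq]
      rw [e1, e2, e3, e4]
      exact ⟨hc1, hc2, hc3, hc4⟩
    · intro y hy
      funext x
      simp only [Finset.mem_filter, decide_eq_true_eq]
      have hx := x.isLt
      cases hyx : y x with
      | true =>
        simp only [decide_eq_true_eq]
        by_cases h1 : (x : ℕ) < t
        · simp [mem_B1, mem_B2, mem_B3, mem_B4, h1, hyx]
        · by_cases h2 : (x : ℕ) < 2*t
          · simp [mem_B1, mem_B2, mem_B3, mem_B4, h1, h2, hyx]; omega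
          · by_cases h3 : (x : ℕ) < 3*t
            · simp [mem_B1, mem_B2, mem_B3, mem_B4, h1, h2, h3, hyx]; omega
            · simp [mem_B1, mem_B2, mem_B3, mem_B4, h1, h2, h3, hyx]; omega
      | false =>
        simp [mem_B1, mem_B2, mem_B3, mem_B4, hyx]
    · intro s hs
      simp only [Finset.mem_product, Finset.mem_powersetCard] at hs
      obtain ⟨⟨hs1, hc1⟩, ⟨hs2, hc2⟩, ⟨hs3, hc3⟩, ⟨hs4, hc4⟩⟩ := hs
      obtain ⟨e1, e2, e3, e4⟩ := recover n t s.1 s.2.1 s.2.2.1 s.2.2.2 hs1 hs2 hs3 hs4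
      simp only [decide_eq_true_eq]
      exact Prod.ext (by simpa using e1) (Prod.ext (by simpa using e2)
        (Prod.ext (by simpa using e3) (by simpa using e4)))
  rw [key]
  simp only [Finset.card_product, Finset.card_powersetCard,
    card_B1 n t h, card_B2 n t h, card_B3 n t h, card_B4 n t h]
  ring

end TripleAux

open Finset TripleAux in
theorem triple_sphere_intersection_count' (n t : ℕ) (ht : 3 * t ≤ n)
    (a b c : Fin n → Bool)
    (ha : a = fun _ => false)
    (hb : b = fun i : Fin n => decide ((i : ℕ) < 2 * t))
    (hc : c = fun i : Fin n => decide ((i : ℕ) < t ∨ (2 * t ≤ (i : ℕ) ∧ (i : ℕ) < 3 * t)))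
    (r₁ r₂ r₃ : ℕ) :
    ((Finset.univ.filter (fun y => hammingDist a y = r₁)) ∩
     (Finset.univ.filter (fun y => hammingDist b y = r₂)) ∩
     (Finset.univ.filter (fun y => hammingDist c y = r₃))).card =
      ∑ a₁ ∈ Finset.range (t + 1), ∑ a₂ ∈ Finset.range (t + 1),
        ∑ a₃ ∈ Finset.range (t + 1), ∑ a₄ ∈ Finset.range (n - 3 * t + 1),
          if (2 * a₂ : ℤ) = r₁ + 2 * t - r₂ - 2 * a₁ ∧
             (2 * a₃ : ℤ) = r₁ + 2 * t - r₃ - 2 * a₁ ∧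
             (2 * a₄ : ℤ) = 2 * a₁ + r₂ + r₃ - 4 * t
          then Nat.choose t a₁ * Nat.choose t a₂ * Nat.choose t a₃ *
               Nat.choose (n - 3 * t) a₄
          else 0 := by
  subst ha hb hc
  set S := ((Finset.univ.filter (fun y : Fin n → Bool =>
      hammingDist (fun _ => false) y = r₁)) ∩
     (Finset.univ.filter (fun y => hammingDist (fun i : Fin n => decide ((i : ℕ) < 2 * t)) y = r₂)) ∩
     (Finset.univ.filter (fun y => hammingDist
        (fun i : Fin n => decide ((i : ℕ) < t ∨ (2 * t ≤ (i : ℕ) ∧ (i : ℕ) < 3 * t))) y = r₃)))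
    with hS
  have hmem : ∀ y ∈ S, (c1 n t y, (c2 n t y, (c3 n t y, c4 n t y))) ∈
      (Finset.range (t+1)) ×ˢ ((Finset.range (t+1)) ×ˢ
        ((Finset.range (t+1)) ×ˢ (Finset.range (n - 3*t + 1)))) := by
    intro y _
    have h1 := cm1 n t ht y
    have h2 := cm2 n t ht y
    have h3 := cm3 n t ht y
    have h4 := c4_le n t ht y
    simp only [Finset.mem_product, Finset.mem_range]
    omega
  rw [Finset.card_eq_sum_card_fiberwise hmem]
  simp only [Finset.sum_product]
  refine Finset.sum_congr rfl fun a₁ _ => Finset.sum_congr rfl fun a₂ _ =>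
    Finset.sum_congr rfl fun a₃ _ => Finset.sum_congr rfl fun a₄ _ => ?_
  split_ifs with hcond
  · obtain ⟨w1, w2, w3⟩ := hcond
    rw [← fiber_card n t ht a₁ a₂ a₃ a₄]
    congr 1
    ext y
    have h1 := cm1 n t ht y
    have h2 := cm2 n t ht y
    have h3 := cm3 n t ht y
    simp only [hS, Finset.mem_filter, Finset.mem_inter, Finset.mem_univ, true_and,
      Prod.mk.injEq]
    constructor
    · rintro ⟨-, hcs⟩; exact hcs
    · intro hcs
      obtain ⟨e1, e2, e3, e4⟩ := hcs
      refine ⟨⟨⟨?_, ?_⟩, ?_⟩, e1, e2, e3, e4⟩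
      · rw [dist_a n t y]; omega
      · rw [dist_b n t y]; omega
      · rw [dist_c n t y]; omega
  · rw [Finset.card_eq_zero, Finset.eq_empty_iff_forall_notMem]
    intro y hy
    have h1 := cm1 n t ht y
    have h2 := cm2 n t ht y
    have h3 := cm3 n t ht y
    simp only [hS, Finset.mem_filter, Finset.mem_inter, Finset.mem_univ, true_and,
      Prod.mk.injEq] at hy
    obtain ⟨⟨⟨d1, d2⟩, d3⟩, e1, e2, e3, e4⟩ := hy
    rw [dist_a n t y] at d1
    rw [dist_b n t y] at d2
    rw [dist_c n t y] at d3
    exact hcond (by constructor <;> [omega; constructor <;> omega])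


theorem triple_sphere_intersection_count (n t : ℕ) (ht : 3 * t ≤ n)
    (a b c : Fin n → Bool)
    (ha : a = fun _ => false)
    (hb : b = fun i : Fin n => decide ((i : ℕ) < 2 * t))
    (hc : c = fun i : Fin n => decide ((i : ℕ) < t ∨ (2 * t ≤ (i : ℕ) ∧ (i : ℕ) < 3 * t)))
    (r₁ r₂ r₃ : ℕ) :
    (hSphere n r₁ a ∩ hSphere n r₂ b ∩ hSphere n r₃ c).card =
      ∑ a₁ ∈ Finset.range (t + 1), ∑ a₂ ∈ Finset.range (t + 1),
        ∑ a₃ ∈ Finset.range (t + 1), ∑ a₄ ∈ Finset.range (n - 3 * t + 1),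
          if (2 * a₂ : ℤ) = r₁ + 2 * t - r₂ - 2 * a₁ ∧
             (2 * a₃ : ℤ) = r₁ + 2 * t - r₃ - 2 * a₁ ∧
             (2 * a₄ : ℤ) = 2 * a₁ + r₂ + r₃ - 4 * t
          then Nat.choose t a₁ * Nat.choose t a₂ * Nat.choose t a₃ *
               Nat.choose (n - 3 * t) a₄
          else 0 := by
  exact triple_sphere_intersection_count' n t ht a b c ha hb hc r₁ r₂ r₃
end

section
/- Let x, y ∈ {0,1}ⁿ with d(x,y) = k, and fix integers r₁, r₂. Then |V_{r₁}(x) ∩ V_{r₂}(y)| = C(k, (k + r₁ − r₂)/2) · C(n−k, (r₁ + r₂ − k)/2) when k + r₁ − r₂ and r₁ + r₂ − k are both even and the binomial arguments lie in range, and the intersection is empty otherwise. -/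
open Finset

/-- The positions inside the disagreement set of `x,y` where `z` differs from `x`. -/
def Aset (n : ℕ) (x y z : Fin n → Bool) : Finset (Fin n) :=
  Finset.univ.filter (fun i => x i ≠ z i ∧ x i ≠ y i)

/-- The positions outside the disagreement set of `x,y` where `z` differs from `x`. -/
def Bset (n : ℕ) (x y z : Fin n → Bool) : Finset (Fin n) :=
  Finset.univ.filter (fun i => x i ≠ z i ∧ x i = y i)

lemma hcup (n : ℕ) (x y z : Fin n → Bool) :
    Finset.univ.filter (fun i => x i ≠ z i) = Aset n x y z ∪ Bset n x y z := by
  ext i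
  simp only [Aset, Bset, mem_filter, mem_union, mem_univ, true_and]
  tauto

lemma hdisjAB (n : ℕ) (x y z : Fin n → Bool) : Disjoint (Aset n x y z) (Bset n x y z) := by
  simp only [disjoint_left, Aset, Bset, mem_filter, mem_univ, true_and]
  tauto

lemma h1 (n : ℕ) (x y z : Fin n → Bool) :
    hammingDist x z = (Aset n x y z).card + (Bset n x y z).card := by
  have : hammingDist x z = (Finset.univ.filter (fun i => x i ≠ z i)).card := rfl
  rw [this, hcup n x y z, card_union_of_disjoint (hdisjAB n x y z)]

lemma h2 (n k : ℕ) (x y z : Fin n → Bool) (hxy : hammingDist x y = k) :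
    hammingDist y z + (Aset n x y z).card = k + (Bset n x y z).card := by
  have e1 : (Finset.univ.filter (fun i => y i ≠ z i) : Finset (Fin n)) =
      (Finset.univ.filter (fun i => x i = z i ∧ x i ≠ y i)) ∪ Bset n x y z := by
    ext i
    simp only [Bset, mem_filter, mem_union, mem_univ, true_and]
    cases hx : x i <;> cases hy : y i <;> cases hz : z i <;> simp
  have d1 : Disjoint (Finset.univ.filter (fun i => x i = z i ∧ x i ≠ y i) : Finset (Fin n))
      (Bset n x y z) := by
    simp only [disjoint_left, Bset, mem_filter, mem_univ, true_and]
    tauto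
  have e2 : (Finset.univ.filter (fun i => x i ≠ y i) : Finset (Fin n)) =
      (Finset.univ.filter (fun i => x i = z i ∧ x i ≠ y i)) ∪ Aset n x y z := by
    ext i
    simp only [Aset, mem_filter, mem_union, mem_univ, true_and]
    tauto
  have d2 : Disjoint (Finset.univ.filter (fun i => x i = z i ∧ x i ≠ y i) : Finset (Fin n))
      (Aset n x y z) := by
    simp only [disjoint_left, Aset, mem_filter, mem_univ, true_and]
    tauto
  have hy : hammingDist y z = (Finset.univ.filter (fun i => y i ≠ z i)).card := rfl
  have hk : k = (Finset.univ.filter (fun i => x i ≠ y i) : Finset (Fin n)).card := by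
    rw [← hxy]; rfl
  rw [hy, e1, card_union_of_disjoint d1, hk, e2, card_union_of_disjoint d2]
  omega

theorem two_sphere_intersection_count (n k r₁ r₂ : ℕ) (x y : Fin n → Bool)
    (hxy : hammingDist x y = k) :
    (hSphere n r₁ x ∩ hSphere n r₂ y).card =
      if (2 : ℤ) ∣ ((k : ℤ) + r₁ - r₂) ∧ (2 : ℤ) ∣ ((r₁ : ℤ) + r₂ - k) ∧
         0 ≤ (k : ℤ) + r₁ - r₂ ∧ ((k : ℤ) + r₁ - r₂) / 2 ≤ k ∧
         0 ≤ (r₁ : ℤ) + r₂ - k ∧ ((r₁ : ℤ) + r₂ - k) / 2 ≤ (n : ℤ) - k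
      then Nat.choose k (((k : ℤ) + r₁ - r₂) / 2).toNat *
           Nat.choose (n - k) (((r₁ : ℤ) + r₂ - k) / 2).toNat
      else 0 := by
  classical
  set S : Finset (Fin n) := Finset.univ.filter (fun i => x i ≠ y i) with hSdef
  have hS : S.card = k := by rw [← hxy]; rfl
  have hkn : k ≤ n := by
    have h := Finset.card_le_univ S
    simp only [Fintype.card_fin, card_univ] at h
    omega
  have hScompl : Sᶜ.card = n - k := by
    rw [card_compl, hS]; simp
  have hAsub : ∀ z, Aset n x y z ⊆ S := fun z i hi => by
    simp only [Aset, mem_filter, mem_univ, true_and] at hi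
    simp only [hSdef, mem_filter, mem_univ, true_and]
    exact hi.2
  have hBsub : ∀ z, Bset n x y z ⊆ Sᶜ := fun z i hi => by
    simp only [Bset, mem_filter, mem_univ, true_and] at hi
    simp only [hSdef, mem_compl, mem_filter, mem_univ, true_and]
    exact fun h => h hi.2
  have h3 : ∀ z, (Aset n x y z).card ≤ k := fun z => hS ▸ card_le_card (hAsub z)
  have h4 : ∀ z, (Bset n x y z).card ≤ n - k := fun z => hScompl ▸ card_le_card (hBsub z)
  have hmem : ∀ z, z ∈ hSphere n r₁ x ∩ hSphere n r₂ y ↔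
      hammingDist x z = r₁ ∧ hammingDist y z = r₂ := by
    intro z; simp [hSphere, mem_inter, mem_filter]
  by_cases hc : (2 : ℤ) ∣ ((k : ℤ) + r₁ - r₂) ∧ (2 : ℤ) ∣ ((r₁ : ℤ) + r₂ - k) ∧
      0 ≤ (k : ℤ) + r₁ - r₂ ∧ ((k : ℤ) + r₁ - r₂) / 2 ≤ k ∧
      0 ≤ (r₁ : ℤ) + r₂ - k ∧ ((r₁ : ℤ) + r₂ - k) / 2 ≤ (n : ℤ) - k
  · rw [if_pos hc]
    obtain ⟨hd1, hd2, hp1, hle1, hp2, hle2⟩ := hc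
    set a : ℕ := (((k : ℤ) + r₁ - r₂) / 2).toNat with hadef
    set b : ℕ := (((r₁ : ℤ) + r₂ - k) / 2).toNat with hbdef
    have ha : (k : ℤ) + r₁ - r₂ = 2 * a := by omega
    have hb : (r₁ : ℤ) + r₂ - k = 2 * b := by omega
    have hak : a ≤ k := by omega
    have hbnk : b ≤ n - k := by omega
    have key : (hSphere n r₁ x ∩ hSphere n r₂ y).card =
        ((S.powersetCard a) ×ˢ (Sᶜ.powersetCard b)).card := by
      apply Finset.card_nbij' (i := fun z => (Aset n x y z, Bset n x y z))
        (j := fun p => fun i => if i ∈ p.1 ∪ p.2 then !(x i) else x i)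
      · intro z hz
        rw [Finset.mem_coe, hmem] at hz
        have e1 := h1 n x y z
        have e2 := h2 n k x y z hxy
        have hA : (Aset n x y z).card = a := by omega
        have hB : (Bset n x y z).card = b := by omega
        simp only [mem_coe, mem_product, mem_powersetCard]
        exact ⟨⟨hAsub z, hA⟩, ⟨hBsub z, hB⟩⟩
      · intro p hp
        simp only [mem_coe, mem_product, mem_powersetCard] at hp
        obtain ⟨⟨hp1s, hp1c⟩, ⟨hp2s, hp2c⟩⟩ := hp
        set z : Fin n → Bool := fun i => if i ∈ p.1 ∪ p.2 then !(x i) else x i with hzdef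
        have hne : ∀ i, x i ≠ z i ↔ i ∈ p.1 ∪ p.2 := by
          intro i
          by_cases h : i ∈ p.1 ∪ p.2
          · have hz' : z i = !(x i) := by simp only [hzdef]; rw [if_pos h]
            cases hx : x i <;> simp [hz', hx, h]
          · have hz' : z i = x i := by simp only [hzdef]; rw [if_neg h]
            simp [hz', h]
        have hAz : Aset n x y z = p.1 := by
          ext i
          simp only [Aset, mem_filter, mem_univ, true_and, hne, mem_union]
          constructor
          · rintro ⟨h | h, hxy'⟩
            · exact h
            · exact absurd (by simpa [hSdef, mem_compl, mem_filter] using hp2s h) hxy'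
          · intro h
            have := hp1s h
            simp only [hSdef, mem_filter, mem_univ, true_and] at this
            exact ⟨Or.inl h, this⟩
        have hBz : Bset n x y z = p.2 := by
          ext i
          simp only [Bset, mem_filter, mem_univ, true_and, hne, mem_union]
          constructor
          · rintro ⟨h | h, hxy'⟩
            · have := hp1s h
              simp only [hSdef, mem_filter, mem_univ, true_and] at this
              exact absurd hxy' this
            · exact h
          · intro h
            have := hp2s h
            simp only [hSdef, mem_compl, mem_filter, mem_univ, true_and] at this
            exact ⟨Or.inr h, by tauto⟩
        rw [Finset.mem_coe, hmem z]
        have e1 := h1 n x y z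
        have e2 := h2 n k x y z hxy
        rw [hAz, hBz, hp1c, hp2c] at e1 e2
        constructor <;> omega
      · intro z hz
        funext i
        show (if i ∈ Aset n x y z ∪ Bset n x y z then !(x i) else x i) = z i
        have hiff : i ∈ Aset n x y z ∪ Bset n x y z ↔ x i ≠ z i := by
          rw [← hcup n x y z]; simp
        by_cases h : x i ≠ z i
        · rw [if_pos (hiff.mpr h)]
          cases hx : x i <;> cases hz' : z i <;> simp [hx, hz'] at h ⊢
        · rw [if_neg (fun hm => h (hiff.mp hm))]
          exact not_ne_iff.mp h
      · intro p hp
        simp only [mem_coe, mem_product, mem_powersetCard] at hp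
        obtain ⟨⟨hp1s, hp1c⟩, ⟨hp2s, hp2c⟩⟩ := hp
        set z : Fin n → Bool := fun i => if i ∈ p.1 ∪ p.2 then !(x i) else x i with hzdef
        have hne : ∀ i, x i ≠ z i ↔ i ∈ p.1 ∪ p.2 := by
          intro i
          by_cases h : i ∈ p.1 ∪ p.2
          · have hz' : z i = !(x i) := by simp only [hzdef]; rw [if_pos h]
            cases hx : x i <;> simp [hz', hx, h]
          · have hz' : z i = x i := by simp only [hzdef]; rw [if_neg h]
            simp [hz', h]
        have hAz : Aset n x y z = p.1 := by
          ext i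
          simp only [Aset, mem_filter, mem_univ, true_and, hne, mem_union]
          constructor
          · rintro ⟨h | h, hxy'⟩
            · exact h
            · exact absurd (by simpa [hSdef, mem_compl, mem_filter] using hp2s h) hxy'
          · intro h
            have := hp1s h
            simp only [hSdef, mem_filter, mem_univ, true_and] at this
            exact ⟨Or.inl h, this⟩
        have hBz : Bset n x y z = p.2 := by
          ext i
          simp only [Bset, mem_filter, mem_univ, true_and, hne, mem_union]
          constructor
          · rintro ⟨h | h, hxy'⟩
            · have := hp1s h
              simp only [hSdef, mem_filter, mem_univ, true_and] at this
              exact absurd hxy' this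
            · exact h
          · intro h
            have := hp2s h
            simp only [hSdef, mem_compl, mem_filter, mem_univ, true_and] at this
            exact ⟨Or.inr h, by tauto⟩
        exact Prod.ext hAz hBz
    rw [key, card_product, card_powersetCard, card_powersetCard, hS, hScompl]
  · rw [if_neg hc]
    rw [Finset.card_eq_zero, Finset.eq_empty_iff_forall_notMem]
    intro z hz
    rw [hmem] at hz
    have e1 := h1 n x y z
    have e2 := h2 n k x y z hxy
    have e3 := h3 z
    have e4 := h4 z
    apply hc
    refine ⟨?_, ?_, ?_, ?_, ?_, ?_⟩ <;> omega
end

section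
/- Define Φ_{α,β}(θ,δ) = (β/2)·H(2θ/β) + β·H((ρ⋆ + β − δ − 2θ)/β) + (1 − 3β/2)·H((θ + δ − β)/(1 − 3β/2)), where ρ⋆ = min{α, δ + 2θ − β/2}. If β = 2α with 0 < β < 2/3, then the only feasible point (θ,δ) with all three entropy arguments in [0,1], δ ≤ α, and 0 ≤ ρ⋆ ≤ α is θ = β/2, δ = β/2, and at this point Φ_{α,β}(θ,δ) = 0; hence f₃(α,2α) = 0. -/
/-- The binary entropy function with natural logarithm (`Real.log 0 = 0` gives
`H 0 = H 1 = 0`). -/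
noncomputable def binEnt (p : ℝ) : ℝ := -p * Real.log p - (1 - p) * Real.log (1 - p)

/-- The optimized normalized distance `ρ⋆ = min{α, δ + 2θ − β/2}`. -/
noncomputable def rhoStar (α β θ δ : ℝ) : ℝ := min α (δ + 2 * θ - β / 2)

/-- The rate function `Φ_{α,β}(θ,δ)`. -/
noncomputable def Phi (α β θ δ : ℝ) : ℝ :=
  (β / 2) * binEnt (2 * θ / β) +
  β * binEnt ((rhoStar α β θ δ + β - δ - 2 * θ) / β) +
  (1 - 3 * β / 2) * binEnt ((θ + δ - β) / (1 - 3 * β / 2))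

/-- The feasible set `D_{α,β}`. -/
def Feasible (α β θ δ : ℝ) : Prop :=
  0 ≤ δ ∧ δ ≤ α ∧ 0 ≤ rhoStar α β θ δ ∧ rhoStar α β θ δ ≤ α ∧
  0 ≤ 2 * θ / β ∧ 2 * θ / β ≤ 1 ∧
  0 ≤ (rhoStar α β θ δ + β - δ - 2 * θ) / β ∧
  (rhoStar α β θ δ + β - δ - 2 * θ) / β ≤ 1 ∧
  0 ≤ (θ + δ - β) / (1 - 3 * β / 2) ∧ (θ + δ - β) / (1 - 3 * β / 2) ≤ 1

lemma binEnt_zero : binEnt 0 = 0 := by simp [binEnt]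

lemma binEnt_one : binEnt 1 = 0 := by simp [binEnt]

theorem critical_boundary_rate_zero (α β : ℝ) (hβ0 : 0 < β) (hβ1 : β < 2 / 3)
    (hcrit : β = 2 * α) :
    (∀ θ δ : ℝ, Feasible α β θ δ → θ = β / 2 ∧ δ = β / 2) ∧
    Phi α β (β / 2) (β / 2) = 0 ∧
    sSup {y : ℝ | ∃ θ δ : ℝ, Feasible α β θ δ ∧ y = Phi α β θ δ} = 0 := by
  have hα : α = β / 2 := by linarith
  have hd : (0:ℝ) < 1 - 3 * β / 2 := by linarith
  have huniq : ∀ θ δ : ℝ, Feasible α β θ δ → θ = β / 2 ∧ δ = β / 2 := by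
    intro θ δ h
    obtain ⟨h1, h2, h3, h4, h5, h6, h7, h8, h9, h10⟩ := h
    have hθle : θ ≤ β / 2 := by
      have := (div_le_one hβ0).mp h6; linarith
    have hsum : 0 ≤ θ + δ - β := by
      have := mul_nonneg h9 hd.le
      rwa [div_mul_cancel₀ _ hd.ne'] at this
    constructor <;> linarith
  have hρ : rhoStar α β (β / 2) (β / 2) = β / 2 := by
    unfold rhoStar
    rw [min_eq_left (by linarith)]
    exact hα
  have hPhi : Phi α β (β / 2) (β / 2) = 0 := by
    unfold Phi
    rw [hρ]
    have e1 : 2 * (β / 2) / β = 1 := by field_simp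
    have e2 : (β / 2 + β - β / 2 - 2 * (β / 2)) / β = 0 := by
      field_simp; norm_num
    have e3 : (β / 2 + β / 2 - β) / (1 - 3 * β / 2) = 0 := by
      rw [show β / 2 + β / 2 - β = 0 by ring, zero_div]
    rw [e1, e2, e3, binEnt_zero, binEnt_one]
    ring
  have hfeas : Feasible α β (β / 2) (β / 2) := by
    have e1 : 2 * (β / 2) / β = 1 := by field_simp
    have e2 : (rhoStar α β (β / 2) (β / 2) + β - β / 2 - 2 * (β / 2)) / β = 0 := by
      rw [hρ]; field_simp; norm_num
    have e3 : (β / 2 + β / 2 - β) / (1 - 3 * β / 2) = 0 := by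
      rw [show β / 2 + β / 2 - β = 0 by ring, zero_div]
    refine ⟨by linarith, hα.ge, ?_, ?_, ?_, ?_, ?_, ?_, ?_, ?_⟩
    · rw [hρ]; linarith
    · rw [hρ, hα]
    · rw [e1]; norm_num
    · rw [e1]
    · rw [e2]
    · rw [e2]; norm_num
    · rw [e3]
    · rw [e3]; norm_num
  refine ⟨huniq, hPhi, ?_⟩
  have hset : {y : ℝ | ∃ θ δ : ℝ, Feasible α β θ δ ∧ y = Phi α β θ δ} = {0} := by
    ext y
    simp only [Set.mem_setOf_eq, Set.mem_singleton_iff]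
    constructor
    · rintro ⟨θ, δ, hf, rfl⟩
      obtain ⟨hθ, hδ⟩ := huniq θ δ hf
      rw [hθ, hδ, hPhi]
    · rintro rfl
      exact ⟨β / 2, β / 2, hfeas, hPhi.symm⟩
  rw [hset, csSup_singleton]
end

section
/- Let k = 2t, r = t + C for a fixed integer C ≥ 0, and let a = 0ⁿ, b = 1^{2t}0^{n-2t}, c = 1^t0^t1^t0^{n-3t} with 3t ≤ n. Then |B_{t+C}(a) ∩ B_{t+C}(b) ∩ B_{t+C}(c)| = O(n^{3C}) as n → ∞, i.e., there is a constant K depending only on C such that the intersection size is at most K·n^{3C} for all sufficiently large n. -/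
/-- Hamming ball of radius `r` around `x`, as a finset. -/
def hBall (n r : ℕ) (x : Fin n → Bool) : Finset (Fin n → Bool) :=
  Finset.univ.filter (fun y => hammingDist x y ≤ r)

lemma card_filter_coe_lt (n m : ℕ) (h : m ≤ n) :
    (Finset.univ.filter (fun i : Fin n => (i : ℕ) < m)).card = m := by
  rw [show (Finset.univ.filter (fun i : Fin n => (i : ℕ) < m))
      = Finset.map (Fin.castLEEmb h) Finset.univ from ?_]
  · simp
  · ext i
    simp only [Finset.mem_filter, Finset.mem_univ, true_and, Finset.mem_map]
    constructor
    · intro hi; exact ⟨⟨(i : ℕ), hi⟩, rfl⟩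
    · rintro ⟨j, -, rfl⟩; exact j.isLt

lemma hBall_card_le (n r : ℕ) (hn : 1 ≤ n) (x : Fin n → Bool) :
    (hBall n r x).card ≤ (r + 1) * n ^ r := by
  classical
  have h1 : (hBall n r x).card ≤
      ((Finset.range (r + 1)).biUnion
        (fun i => Finset.powersetCard i (Finset.univ : Finset (Fin n)))).card := by
    apply Finset.card_le_card_of_injOn (fun y => Finset.univ.filter (fun i => x i ≠ y i))
    · intro y hy
      simp only [hBall, Finset.mem_coe, Finset.mem_filter, Finset.mem_univ, true_and] at hy
      simp only [Finset.mem_coe, Finset.mem_biUnion, Finset.mem_range, Finset.mem_powersetCard]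
      exact ⟨(Finset.univ.filter (fun i => x i ≠ y i)).card,
        Nat.lt_succ_of_le hy, Finset.subset_univ _, rfl⟩
    · intro y1 _ y2 _ heq
      funext i
      have hi := Finset.ext_iff.mp heq i
      simp only [Finset.mem_filter, Finset.mem_univ, true_and] at hi
      cases hx : x i <;> cases hy1 : y1 i <;> cases hy2 : y2 i <;> simp_all
  refine h1.trans ((Finset.card_biUnion_le).trans ?_)
  have h2 : ∀ i ∈ Finset.range (r + 1),
      (Finset.powersetCard i (Finset.univ : Finset (Fin n))).card ≤ n ^ r := by
    intro i hi
    rw [Finset.card_powersetCard, Finset.card_univ, Fintype.card_fin]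
    exact (Nat.choose_le_pow n i).trans
      (Nat.pow_le_pow_right hn (Nat.lt_succ_iff.mp (Finset.mem_range.mp hi)))
  calc ∑ i ∈ Finset.range (r + 1), (Finset.powersetCard i (Finset.univ : Finset (Fin n))).card
      ≤ ∑ _i ∈ Finset.range (r + 1), n ^ r := Finset.sum_le_sum h2
    _ = (r + 1) * n ^ r := by simp [Finset.sum_const, mul_comm]

set_option linter.unnecessarySeqFocus false in
lemma pointwise_ineq (u t : ℕ) (v : Bool) :
    (if u < 3 * t then 1 else 0) + (if decide (u < t) ≠ v then 1 else 0) ≤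
    ((if (false : Bool) ≠ v then 1 else 0) + (if decide (u < 2 * t) ≠ v then 1 else 0)) +
      (if decide (u < t ∨ (2 * t ≤ u ∧ u < 3 * t)) ≠ v then 1 else 0) := by
  cases v <;> by_cases h1 : u < t <;> by_cases h2 : u < 2 * t <;> by_cases h3 : u < 3 * t <;>
    simp [h1, h2, h3, Nat.not_lt.mp] <;> omega

theorem critical_window_polynomial_bound (C : ℕ) :
    ∃ K N₀ : ℕ, ∀ n : ℕ, N₀ ≤ n → ∀ t : ℕ, 3 * t ≤ n →
      ∀ a b c : Fin n → Bool,
        a = (fun _ => false) →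
        b = (fun i : Fin n => decide ((i : ℕ) < 2 * t)) →
        c = (fun i : Fin n => decide ((i : ℕ) < t ∨ (2 * t ≤ (i : ℕ) ∧ (i : ℕ) < 3 * t))) →
        (hBall n (t + C) a ∩ hBall n (t + C) b ∩ hBall n (t + C) c).card ≤
          K * n ^ (3 * C) := by
  classical
  refine ⟨3 * C + 1, 1, ?_⟩
  intro n hn t ht a b c ha hb hc
  subst ha hb hc
  have hsub : (hBall n (t + C) (fun _ => false) ∩
      hBall n (t + C) (fun i : Fin n => decide ((i : ℕ) < 2 * t)) ∩
      hBall n (t + C) (fun i : Fin n => decide ((i : ℕ) < t ∨ (2 * t ≤ (i : ℕ) ∧ (i : ℕ) < 3 * t))))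
      ⊆ hBall n (3 * C) (fun i : Fin n => decide ((i : ℕ) < t)) := by
    intro y hy
    simp only [hBall, Finset.mem_inter, Finset.mem_filter, Finset.mem_univ, true_and] at hy ⊢
    obtain ⟨⟨h1, h2⟩, h3⟩ := hy
    have key : 3 * t + hammingDist (fun i : Fin n => decide ((i : ℕ) < t)) y ≤
        hammingDist (fun _ : Fin n => false) y +
        hammingDist (fun i : Fin n => decide ((i : ℕ) < 2 * t)) y +
        hammingDist (fun i : Fin n => decide ((i : ℕ) < t ∨ (2 * t ≤ (i : ℕ) ∧ (i : ℕ) < 3 * t))) y := by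
      calc 3 * t + hammingDist (fun i : Fin n => decide ((i : ℕ) < t)) y
          = (Finset.univ.filter (fun i : Fin n => (i : ℕ) < 3 * t)).card
            + (Finset.univ.filter (fun i : Fin n => decide ((i : ℕ) < t) ≠ y i)).card := by
            rw [card_filter_coe_lt n _ ht]; rfl
        _ = ∑ i : Fin n, ((if (i : ℕ) < 3 * t then 1 else 0)
              + (if decide ((i : ℕ) < t) ≠ y i then 1 else 0)) := by
            rw [Finset.card_filter, Finset.card_filter, Finset.sum_add_distrib]
        _ ≤ ∑ i : Fin n, (((if (false : Bool) ≠ y i then 1 else 0)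
              + (if decide ((i : ℕ) < 2 * t) ≠ y i then 1 else 0))
              + (if decide ((i : ℕ) < t ∨ (2 * t ≤ (i : ℕ) ∧ (i : ℕ) < 3 * t)) ≠ y i then 1 else 0)) :=
            Finset.sum_le_sum (fun i _ => pointwise_ineq (i : ℕ) t (y i))
        _ = hammingDist (fun _ : Fin n => false) y +
            hammingDist (fun i : Fin n => decide ((i : ℕ) < 2 * t)) y +
            hammingDist (fun i : Fin n => decide ((i : ℕ) < t ∨ (2 * t ≤ (i : ℕ) ∧ (i : ℕ) < 3 * t))) y := by
            rw [Finset.sum_add_distrib, Finset.sum_add_distrib,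
              ← Finset.card_filter, ← Finset.card_filter, ← Finset.card_filter]
            rfl
    omega
  calc (hBall n (t + C) (fun _ => false) ∩
      hBall n (t + C) (fun i : Fin n => decide ((i : ℕ) < 2 * t)) ∩
      hBall n (t + C) (fun i : Fin n => decide ((i : ℕ) < t ∨ (2 * t ≤ (i : ℕ) ∧ (i : ℕ) < 3 * t)))).card
      ≤ (hBall n (3 * C) (fun i : Fin n => decide ((i : ℕ) < t))).card := Finset.card_le_card hsub
    _ ≤ (3 * C + 1) * n ^ (3 * C) := hBall_card_le n (3 * C) hn _
end
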